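/- Let Δ_1, ..., Δ_{d+1} be nonempty compact convex sets in R^d, let x ∈ conv(Δ_1 ∪ ... ∪ Δ_{d+1}), and suppose there exist points y'_1 ∈ Δ_1, ..., y'_{d+1} ∈ Δ_{d+1} with x ∉ conv{y'_1,...,y'_{d+1}}. Then there exist points z_1 ∈ Δ_1, ..., z_{d+1} ∈ Δ_{d+1} such that x lies on the boundary of conv{z_1, ..., z_{d+1}}; in particular, if additionally every (d+1)-tuple from Δ_1 × ... × Δ_{d+1} is affinely independent, there is a hyperplane through x intersecting at least d of the sets Δ_i. -/

import Mathlib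

open Set Finset
open scoped Classical

section Aux

variable {E : Type*} [NormedAddCommGroup E] [NormedSpace ℝ E]

lemma sep_of_not_mem {n : ℕ} (z : Fin n → E) (x : E)
    (hx : x ∉ convexHull ℝ (Set.range z)) :
    ∃ (f : E →L[ℝ] ℝ) (u : ℝ), (∀ i, f (z i) < u) ∧ u < f x := by
  obtain ⟨f, u, h1, h2⟩ := geometric_hahn_banach_closed_point
    (convex_convexHull ℝ _) ((Set.finite_range z).isClosed_convexHull ℝ) hx
  exact ⟨f, u, fun i => h1 _ (subset_convexHull ℝ _ (Set.mem_range_self i)), h2⟩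

lemma le_on_hull {n : ℕ} (f : E →L[ℝ] ℝ) (u : ℝ) (z : Fin n → E)
    (h : ∀ i, f (z i) ≤ u) : ∀ b ∈ convexHull ℝ (Set.range z), f b ≤ u := by
  intro b hb
  have hsub : convexHull ℝ (Set.range z) ⊆ {p | f p ≤ u} :=
    convexHull_min (by rintro _ ⟨i, rfl⟩; exact h i)
      (convex_halfSpace_le ⟨fun a b => map_add f a b, fun c a => map_smul f c a⟩ u)
  exact hsub hb

lemma isOpen_not_mem_hull {n : ℕ} (x : E) (y : ℝ → Fin n → E)
    (hy : ∀ i, Continuous fun t => y t i) :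
    IsOpen {t | x ∉ convexHull ℝ (Set.range (y t))} := by
  rw [isOpen_iff_mem_nhds]
  intro t₀ ht₀
  obtain ⟨f, u, h1, h2⟩ := sep_of_not_mem (y t₀) x ht₀
  have hev : ∀ᶠ t in nhds t₀, ∀ i, f (y t i) < u := by
    rw [Filter.eventually_all]
    intro i
    exact (isOpen_lt (f.continuous.comp (hy i)) continuous_const).mem_nhds (h1 i)
  filter_upwards [hev] with t ht hmem
  exact absurd (le_on_hull f u (y t) (fun i => (ht i).le) x hmem) (not_le.mpr h2)

lemma mem_hull_of_close {n : ℕ} (x : E) (ε : ℝ) (hε : 0 < ε) (p q : Fin (n + 1) → E)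
    (hball : Metric.ball x ε ⊆ convexHull ℝ (Set.range p))
    (hq : ∀ i, dist (q i) (p i) ≤ ε / 2) :
    x ∈ convexHull ℝ (Set.range q) := by
  by_contra hx
  obtain ⟨f, u, h1, h2⟩ := sep_of_not_mem q x hx
  have hfne : f ≠ 0 := by
    intro h
    rw [h] at h1 h2
    simp only [ContinuousLinearMap.zero_apply] at h1 h2
    exact absurd ((h1 0).trans h2) (lt_irrefl _)
  have hf0 : 0 < ‖f‖ := by
    rcases (norm_nonneg f).lt_or_eq with h | h
    · exact h
    · exact absurd (f.opNorm_zero_iff.mp h.symm) hfne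
  have hp : ∀ i, f (p i) ≤ u + ‖f‖ * (ε / 2) := by
    intro i
    have h3 : f (p i) - f (q i) ≤ ‖f‖ * (ε / 2) := by
      calc f (p i) - f (q i) = f (p i - q i) := (map_sub f _ _).symm
        _ ≤ ‖f (p i - q i)‖ := le_abs_self _
        _ ≤ ‖f‖ * ‖p i - q i‖ := f.le_opNorm _
        _ ≤ ‖f‖ * (ε / 2) := by
            refine mul_le_mul_of_nonneg_left ?_ (norm_nonneg f)
            rw [← dist_eq_norm, dist_comm]
            exact hq i
    linarith [(h1 i).le]
  obtain ⟨v, hv1, hv2⟩ := f.exists_lt_apply_of_lt_opNorm (r := 3 / 4 * ‖f‖) (by nlinarith)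
  set v' : E := if 0 ≤ f v then v else -v with hv'
  have hv'1 : ‖v'‖ < 1 := by
    rw [hv']; split <;> simpa
  have hv'2 : 3 / 4 * ‖f‖ < f v' := by
    rw [hv']; split
    · rwa [Real.norm_eq_abs, abs_of_nonneg ‹_›] at hv2
    · rw [map_neg]
      rwa [Real.norm_eq_abs, abs_of_neg (lt_of_not_ge ‹_›)] at hv2
  set w : E := x + (3 * ε / 4) • v' with hw
  have hwball : w ∈ Metric.ball x ε := by
    rw [Metric.mem_ball, hw, dist_self_add_left, norm_smul, Real.norm_eq_abs,
      abs_of_nonneg (by linarith : (0:ℝ) ≤ 3 * ε / 4)]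
    nlinarith
  have hwle : f w ≤ u + ‖f‖ * (ε / 2) := le_on_hull f _ p hp w (hball hwball)
  have hfw : f w = f x + (3 * ε / 4) * f v' := by
    rw [hw, map_add, map_smul, smul_eq_mul]
  nlinarith

lemma colorful_rep {ι : Type*} [Fintype ι] (Δ : ι → Set E)
    (hne : ∀ i, (Δ i).Nonempty) (hcv : ∀ i, Convex ℝ (Δ i))
    (x : E) (hx : x ∈ convexHull ℝ (⋃ i, Δ i)) :
    ∃ y : ι → E, (∀ i, y i ∈ Δ i) ∧ x ∈ convexHull ℝ (Set.range y) := by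
  rw [mem_convexHull_iff_exists_fintype] at hx
  obtain ⟨κ, _, w, p, hw₀, hw₁, hp, hs⟩ := hx
  choose c hc using fun j => Set.mem_iUnion.mp (hp j)
  set W : ι → ℝ := fun i => ∑ j ∈ Finset.univ.filter (fun j => c j = i), w j with hW
  have hW₀ : ∀ i, 0 ≤ W i := fun i => Finset.sum_nonneg fun j _ => hw₀ j
  have hW₁ : ∑ i, W i = 1 := by rw [← hw₁]; exact Finset.sum_fiberwise _ _ _
  set q : ι → E := fun i => if h : W i = 0 then (hne i).some
    else (Finset.univ.filter (fun j => c j = i)).centerMass w p with hqdef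
  have hq : ∀ i, q i ∈ Δ i := by
    intro i
    rw [hqdef]
    dsimp only
    split
    · exact (hne i).some_mem
    · exact (hcv i).centerMass_mem (fun j _ => hw₀ j)
        (lt_of_le_of_ne (hW₀ i) (Ne.symm ‹_›))
        (fun j hj => by rw [← (Finset.mem_filter.mp hj).2]; exact hc j)
  have hsum : ∑ i, W i • q i = x := by
    rw [← hs, ← Finset.sum_fiberwise Finset.univ c (fun j => w j • p j)]
    refine Finset.sum_congr rfl fun i _ => ?_
    rw [hqdef]
    dsimp only
    split
    · rename_i h
      rw [h, zero_smul]
      refine (Finset.sum_eq_zero fun j hj => ?_).symm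
      have := (Finset.sum_eq_zero_iff_of_nonneg (fun j _ => hw₀ j)).mp h j hj
      rw [this, zero_smul]
    · rename_i h
      rw [Finset.centerMass, smul_smul, mul_inv_cancel₀ h, one_smul]
  exact ⟨q, hq, mem_convexHull_of_exists_fintype W q hW₀ hW₁
    (fun i => Set.mem_range_self i) hsum⟩

end Aux
theorem stmt16 (d : ℕ) (Δ : Fin (d + 1) → Set (Fin d → ℝ))
    (hne : ∀ i, (Δ i).Nonempty) (hcp : ∀ i, IsCompact (Δ i))
    (hcv : ∀ i, Convex ℝ (Δ i))
    (x : Fin d → ℝ) (hx : x ∈ convexHull ℝ (⋃ i, Δ i))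
    (y' : Fin (d + 1) → Fin d → ℝ) (hy' : ∀ i, y' i ∈ Δ i)
    (hout : x ∉ convexHull ℝ (Set.range y')) :
    (∃ z : Fin (d + 1) → Fin d → ℝ, (∀ i, z i ∈ Δ i) ∧
      x ∈ frontier (convexHull ℝ (Set.range z))) ∧
    ((∀ z : Fin (d + 1) → Fin d → ℝ, (∀ i, z i ∈ Δ i) → AffineIndependent ℝ z) →
      ∃ (a : Fin d → ℝ) (c₀ : ℝ), a ≠ 0 ∧ (∑ k, a k * x k = c₀) ∧
        d ≤ (Finset.univ.filter
          (fun i : Fin (d + 1) => ∃ p ∈ Δ i, ∑ k, a k * p k = c₀)).card) := by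
  obtain ⟨y, hy, hxy⟩ := colorful_rep Δ hne hcv x hx
  set Y : ℝ → Fin (d + 1) → Fin d → ℝ := fun t i => (1 - t) • y i + t • y' i with hYdef
  have hYc : ∀ i, Continuous fun t => Y t i := by
    intro i
    exact ((continuous_const.sub continuous_id).smul continuous_const).add
      (continuous_id.smul continuous_const)
  have hY0 : Y 0 = y := by funext i; simp [hYdef]
  have hY1 : Y 1 = y' := by funext i; simp [hYdef]
  set T : Set ℝ := {t | t ∈ Set.Icc (0:ℝ) 1 ∧ x ∈ convexHull ℝ (Set.range (Y t))} with hTdef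
  have hT0 : (0:ℝ) ∈ T := ⟨⟨le_refl _, zero_le_one⟩, by rwa [hY0]⟩
  have hTne : T.Nonempty := ⟨0, hT0⟩
  have hTbdd : BddAbove T := ⟨1, fun t ht => ht.1.2⟩
  have hTclosed : IsClosed T := by
    have h : T = Set.Icc 0 1 ∩ {t | x ∉ convexHull ℝ (Set.range (Y t))}ᶜ := by
      ext t
      simp only [hTdef, Set.mem_inter_iff, Set.mem_setOf_eq, Set.mem_compl_iff, not_not]
    rw [h]
    exact isClosed_Icc.inter (isOpen_not_mem_hull x Y hYc).isClosed_compl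
  set t₀ := sSup T with ht₀def
  have ht₀T : t₀ ∈ T := hTclosed.csSup_mem hTne hTbdd
  have ht₀1 : t₀ < 1 := lt_of_le_of_ne ht₀T.1.2 (fun h => hout (by
    rw [← hY1, ← h]; exact ht₀T.2))
  set z := Y t₀ with hzdef
  have hz : ∀ i, z i ∈ Δ i := fun i =>
    hcv i (hy i) (hy' i) (by linarith [ht₀T.1.1] : (0:ℝ) ≤ 1 - t₀) ht₀T.1.1 (by ring)
  have hclosed : IsClosed (convexHull ℝ (Set.range z)) :=
    (Set.finite_range z).isClosed_convexHull ℝ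
  have hmem : x ∈ convexHull ℝ (Set.range z) := ht₀T.2
  have hfront : x ∈ frontier (convexHull ℝ (Set.range z)) := by
    rw [frontier, hclosed.closure_eq]
    refine ⟨hmem, fun hint => ?_⟩
    obtain ⟨ε, hε, hball⟩ := Metric.isOpen_iff.mp isOpen_interior x hint
    have hball' : Metric.ball x ε ⊆ convexHull ℝ (Set.range z) :=
      hball.trans interior_subset
    have hev : ∀ᶠ t in nhds t₀, ∀ i, dist (Y t i) (z i) ≤ ε / 2 := by
      rw [Filter.eventually_all]
      intro i
      have hmemnb : Metric.closedBall (z i) (ε / 2) ∈ nhds (Y t₀ i) :=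
        Metric.closedBall_mem_nhds _ (by linarith)
      exact (((hYc i).tendsto t₀).eventually_mem hmemnb).mono
        (fun t ht => Metric.mem_closedBall.mp ht)
    have hev2 : ∀ᶠ t in nhdsWithin t₀ (Set.Ioi t₀),
        ((∀ i, dist (Y t i) (z i) ≤ ε / 2) ∧ t < 1) ∧ t ∈ Set.Ioi t₀ :=
      ((hev.filter_mono nhdsWithin_le_nhds).and
        (Filter.eventually_of_mem (Ioo_mem_nhdsGT ht₀1) (fun t ht => ht.2))).and
        (Filter.eventually_of_mem self_mem_nhdsWithin (fun t ht => ht))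
    obtain ⟨t, ⟨hdist, ht1⟩, htI⟩ := hev2.exists
    have hmemt : x ∈ convexHull ℝ (Set.range (Y t)) :=
      mem_hull_of_close x ε hε z (Y t) hball' hdist
    have htT : t ∈ T := ⟨⟨le_trans ht₀T.1.1 (le_of_lt htI), ht1.le⟩, hmemt⟩
    exact absurd (le_csSup hTbdd htT) (not_le.mpr htI)
  refine ⟨⟨z, hz, hfront⟩, fun haff => ?_⟩
  have hbind : AffineIndependent ℝ z := haff z hz
  have htot : affineSpan ℝ (Set.range z) = ⊤ := by
    rw [hbind.affineSpan_eq_top_iff_card_eq_finrank_add_one]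
    simp [Module.finrank_fin_fun]
  let b : AffineBasis (Fin (d + 1)) ℝ (Fin d → ℝ) := ⟨z, hbind, htot⟩
  have hrange : Set.range (b : Fin (d + 1) → Fin d → ℝ) = Set.range z := rfl
  have hcoord_nonneg : ∀ i, 0 ≤ b.coord i x := by
    have h := hmem
    rw [← hrange, AffineBasis.convexHull_eq_nonneg_coord] at h
    exact h
  have hnotint : x ∉ interior (convexHull ℝ (Set.range z)) := hfront.2
  rw [← hrange, b.interior_convexHull] at hnotint
  simp only [Set.mem_setOf_eq, not_forall, not_lt] at hnotint
  obtain ⟨i₀, hi₀⟩ := hnotint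
  have hc0 : b.coord i₀ x = 0 := le_antisymm hi₀ (hcoord_nonneg i₀)
  set f := b.coord i₀ with hfdef
  set a : Fin d → ℝ := fun k => f.linear (Pi.single k 1) with hadef
  have hlin : ∀ p : Fin d → ℝ, (∑ k, a k * p k) = f.linear p := by
    intro p
    have hp : p = ∑ k, p k • (Pi.single k 1 : Fin d → ℝ) := by
      funext j
      simp only [Finset.sum_apply, Pi.smul_apply, Pi.single_apply, smul_eq_mul,
        mul_ite, mul_one, mul_zero]
      rw [Finset.sum_ite_eq]
      simp
    conv_rhs => rw [hp]
    rw [map_sum]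
    exact Finset.sum_congr rfl fun k _ => by rw [map_smul, smul_eq_mul, mul_comm]
  have hdiff : ∀ u v : Fin d → ℝ, f u - f v = f.linear u - f.linear v := by
    intro u v
    have h := f.linearMap_vsub u v
    simpa [vsub_eq_sub, map_sub] using h.symm
  refine ⟨a, ∑ k, a k * x k, ?_, rfl, ?_⟩
  · intro ha
    have h1 : f (z i₀) = 1 := b.coord_apply_eq i₀
    have h2 : f.linear (z i₀) = 0 := by rw [← hlin]; simp [ha]
    have h3 : f.linear x = 0 := by rw [← hlin]; simp [ha]
    have h4 := hdiff (z i₀) x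
    rw [h1, hc0, h2, h3] at h4
    norm_num at h4
  · have hsub : Finset.univ.erase i₀ ⊆ Finset.univ.filter
        (fun i : Fin (d + 1) => ∃ p ∈ Δ i, ∑ k, a k * p k = ∑ k, a k * x k) := by
      intro j hj
      rw [Finset.mem_filter]
      refine ⟨Finset.mem_univ _, z j, hz j, ?_⟩
      have hj0 : f (z j) = 0 := b.coord_apply_ne (Finset.ne_of_mem_erase hj).symm
      have h4 := hdiff (z j) x
      rw [hj0, hc0] at h4
      rw [hlin, hlin]
      linarith
    calc d = (Finset.univ.erase i₀).card := by
          rw [Finset.card_erase_of_mem (Finset.mem_univ _), Finset.card_univ, Fintype.card_fin]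
          omega
      _ ≤ _ := Finset.card_le_card hsub
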